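/- If u is t-dominant over v (i.e., u ≠ v and D_t(v) ⊆ D_t(u)) then for every s > t (with s ≤ n), u is s-dominant over v, i.e., D_s(v) ⊆ D_s(u). -/

import Mathlib

/-- The set of subsequences of `u` of length `u.length - t`. -/
def Dset (t : ℕ) (u : List Bool) : Set (List Bool) :=
  {w | w.Sublist u ∧ w.length = u.length - t}

lemma exists_mid {α : Type*} {w v : List α} (h : w.Sublist v) :
    ∀ m, w.length ≤ m → m ≤ v.length → ∃ w', w.Sublist w' ∧ w'.Sublist v ∧ w'.length = m := by
  induction h with
  | slnil =>
    intro m h1 h2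
    simp at h2
    exact ⟨[], by simp [h2]⟩
  | cons a h ih =>
    rename_i w v
    intro m h1 h2
    rcases Nat.lt_or_ge m (v.length + 1) with hm | hm
    · obtain ⟨w', hw1, hw2, hw3⟩ := ih m h1 (Nat.lt_succ_iff.mp hm)
      exact ⟨w', hw1, hw2.cons a, hw3⟩
    · have hm' : m = v.length + 1 := le_antisymm (by simpa using h2) hm
      obtain ⟨w', hw1, hw2, hw3⟩ := ih v.length h.length_le le_rfl
      exact ⟨a :: w', hw1.trans (List.sublist_cons_self a w'),
        (List.Sublist.cons₂ a hw2), by simp [hw3, hm']⟩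
  | cons_cons a h ih =>
    rename_i w v
    intro m h1 h2
    simp only [List.length_cons] at h1 h2
    obtain ⟨w', hw1, hw2, hw3⟩ := ih (m - 1) (by omega) (by omega)
    exact ⟨a :: w', List.Sublist.cons₂ a hw1, List.Sublist.cons₂ a hw2, by simp [hw3]; omega⟩

theorem dominant_mono (n t s : ℕ) (u v : List Bool)
    (hu : u.length = n) (hv : v.length = n) (hne : u ≠ v)
    (hdom : Dset t v ⊆ Dset t u) (hts : t < s) (hsn : s ≤ n) :
    Dset s v ⊆ Dset s u := by
  rintro w ⟨hwv, hlen⟩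
  rw [hv] at hlen
  obtain ⟨w', hw1, hw2, hw3⟩ := exists_mid hwv (n - t)
    (by rw [hlen]; exact Nat.sub_le_sub_left hts.le n) (by rw [hv]; exact Nat.sub_le n t)
  have : w' ∈ Dset t u := hdom ⟨hw2, by rw [hv, hw3]⟩
  exact ⟨hw1.trans this.1, by rw [hu, hlen]⟩
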